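/- Let f be intersecting submodular with f(∅)=0 and f̂ its Dilworth truncation. Then the polyhedra coincide: {x ∈ ℝ^V : x(X) ≤ f(X) ∀ X ⊆ V} = {x ∈ ℝ^V : x(X) ≤ f̂(X) ∀ X ⊆ V}. -/
import Mathlib


/-- `P` is a partition of the finite set `X` into nonempty blocks. -/
def IsPartitionOf {V : Type*} [DecidableEq V] (P : Finset (Finset V)) (X : Finset V) : Prop :=
  (∀ C ∈ P, C.Nonempty) ∧
    (∀ C ∈ P, ∀ C' ∈ P, C ≠ C' → Disjoint C C') ∧
    P.sup id = X

/-- The Dilworth truncation `f̂(X) = min_{P ∈ Π(X)} ∑_{C ∈ P} f(C)`. -/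
noncomputable def dilworthTruncation {V : Type*} [DecidableEq V]
    (f : Finset V → ℝ) (X : Finset V) : ℝ :=
  sInf {s : ℝ | ∃ P : Finset (Finset V), IsPartitionOf P X ∧ s = ∑ C ∈ P, f C}

lemma sum_of_partition {V : Type*} [DecidableEq V] (x : V → ℝ)
    (P : Finset (Finset V)) (X : Finset V) (hP : IsPartitionOf P X) :
    ∑ i ∈ X, x i = ∑ C ∈ P, ∑ i ∈ C, x i := by
  obtain ⟨-, h2, h3⟩ := hP
  rw [← h3, Finset.sup_eq_biUnion]
  exact Finset.sum_biUnion (fun C hC C' hC' hne => h2 C hC C' hC' hne)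

lemma exists_partition {V : Type*} [DecidableEq V] (X : Finset V) :
    IsPartitionOf (X.image fun i => ({i} : Finset V)) X := by
  refine ⟨?_, ?_, ?_⟩
  · intro C hC
    obtain ⟨i, -, rfl⟩ := Finset.mem_image.mp hC
    exact Finset.singleton_nonempty i
  · intro C hC C' hC' hne
    obtain ⟨i, -, rfl⟩ := Finset.mem_image.mp hC
    obtain ⟨j, -, rfl⟩ := Finset.mem_image.mp hC'
    simp only [Finset.disjoint_singleton]
    intro h; exact hne (by rw [h])
  · ext a
    simp [Finset.mem_sup]

theorem polyhedron_eq_dilworth_polyhedron {V : Type*} [Fintype V] [DecidableEq V]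
    (f : Finset V → ℝ) (h0 : f ∅ = 0)
    (hint : ∀ X Y : Finset V, (X ∩ Y).Nonempty →
      f (X ∪ Y) + f (X ∩ Y) ≤ f X + f Y) :
    {x : V → ℝ | ∀ X : Finset V, ∑ i ∈ X, x i ≤ f X} =
      {x : V → ℝ | ∀ X : Finset V, ∑ i ∈ X, x i ≤ dilworthTruncation f X} := by
  ext x
  simp only [Set.mem_setOf_eq]
  constructor
  · intro hx X
    apply le_csInf
    · exact ⟨_, _, exists_partition X, rfl⟩
    · rintro s ⟨P, hP, rfl⟩
      rw [sum_of_partition x P X hP]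
      exact Finset.sum_le_sum fun C _ => hx C
  · intro hx X
    refine (hx X).trans ?_
    have hbdd : BddBelow {s : ℝ | ∃ P : Finset (Finset V),
        IsPartitionOf P X ∧ s = ∑ C ∈ P, f C} := by
      apply Set.Finite.bddBelow
      apply (Set.finite_range (fun P : Finset (Finset V) => ∑ C ∈ P, f C)).subset
      rintro s ⟨P, -, rfl⟩
      exact ⟨P, rfl⟩
    rcases eq_or_ne X ∅ with rfl | hne
    · exact csInf_le hbdd ⟨∅, ⟨by simp, by simp, by simp⟩, by simp [h0]⟩
    · refine csInf_le hbdd ⟨{X}, ⟨?_, ?_, by simp⟩, by simp⟩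
      · intro C hC; rw [Finset.mem_singleton.mp hC]
        exact Finset.nonempty_of_ne_empty hne
      · intro C hC C' hC' hne'
        rw [Finset.mem_singleton.mp hC, Finset.mem_singleton.mp hC'] at hne'
        exact absurd rfl hne'
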